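/- Let $x_1, x_2$ be i.i.d. with law $S\,\delta_0 + (1-S)\,\mathrm{Unif}(0,1]$ for $S \in [0,1)$. The conditional variances of $x_1 - x_2$ satisfy $\mathrm{Var}(x_1-x_2 \mid x_1 \le x_2) = \frac{1}{6}\frac{(1-S)(1+3S)}{1+S^2} - \left(\frac{1}{3}\frac{(1-S)(1+2S)}{1+S^2}\right)^2$ and $\mathrm{Var}(x_1-x_2 \mid x_1 > x_2) = \frac{1}{6}\frac{1+3S}{1+S} - \left(\frac{1}{3}\frac{1+2S}{1+S}\right)^2$. -/

import Mathlib

open MeasureTheory ProbabilityTheory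

/-- The sparse-uniform mixture law `S·δ₀ + (1-S)·Unif(0,1]`. -/
noncomputable def mixLaw (S : ℝ) : Measure ℝ :=
  (ENNReal.ofReal S) • Measure.dirac 0 +
    (ENNReal.ofReal (1 - S)) • (volume.restrict (Set.Ioc (0:ℝ) 1))

open Set

noncomputable def L01 : Measure ℝ := volume.restrict (Set.Ioc (0:ℝ) 1)

instance : IsProbabilityMeasure L01 := ⟨by simp [L01, Real.volume_Ioc]⟩

lemma L01_prod_eq : L01.prod L01 = volume.restrict (Set.Ioc (0:ℝ) 1 ×ˢ Set.Ioc (0:ℝ) 1) := by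
  rw [L01, Measure.prod_restrict, ← Measure.volume_eq_prod]

lemma hI1 (f : ℝ × ℝ → ℝ) (hf : Continuous f) {s : Set (ℝ × ℝ)} (hs : MeasurableSet s) :
    Integrable f ((Measure.dirac ((0:ℝ),(0:ℝ))).restrict s) := by
  classical
  rw [MeasureTheory.restrict_dirac' hs]
  split_ifs with h
  · exact (integrable_const ‖f ((0:ℝ),(0:ℝ))‖).mono' hf.aestronglyMeasurable
      (by rw [MeasureTheory.ae_dirac_eq]; exact Filter.eventually_pure.2 le_rfl)
  · exact integrable_zero_measure

lemma hI2 (f : ℝ × ℝ → ℝ) (hf : Continuous f) {s : Set (ℝ × ℝ)} (hs : MeasurableSet s) :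
    Integrable f ((L01.map (Prod.mk (0:ℝ))).restrict s) := by
  rw [Measure.restrict_map measurable_prodMk_left hs, L01,
    Measure.restrict_restrict (measurable_prodMk_left hs),
    integrable_map_measure hf.aestronglyMeasurable measurable_prodMk_left.aemeasurable]
  exact ((hf.comp (Continuous.prodMk_right 0)).integrableOn_Icc (a := 0) (b := 1)).mono_set
    (fun x hx => Ioc_subset_Icc_self hx.2)

lemma hI3 (f : ℝ × ℝ → ℝ) (hf : Continuous f) {s : Set (ℝ × ℝ)} (hs : MeasurableSet s) :
    Integrable f ((L01.map (fun x => (x, (0:ℝ)))).restrict s) := by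
  rw [Measure.restrict_map measurable_prodMk_right hs, L01,
    Measure.restrict_restrict (measurable_prodMk_right hs),
    integrable_map_measure hf.aestronglyMeasurable measurable_prodMk_right.aemeasurable]
  exact ((hf.comp (Continuous.prodMk_left 0)).integrableOn_Icc (a := 0) (b := 1)).mono_set
    (fun x hx => Ioc_subset_Icc_self hx.2)

lemma hI4 (f : ℝ × ℝ → ℝ) (hf : Continuous f) {s : Set (ℝ × ℝ)} (hs : MeasurableSet s) :
    Integrable f ((L01.prod L01).restrict s) := by
  rw [L01_prod_eq, Measure.restrict_restrict hs]
  refine ((hf.continuousOn.integrableOn_compact ((isCompact_Icc (a := (0:ℝ)) (b := 1)).prod (isCompact_Icc (a := (0:ℝ)) (b := 1))))).mono_set ?_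
  exact fun p hp => ⟨Ioc_subset_Icc_self hp.2.1, Ioc_subset_Icc_self hp.2.2⟩

lemma mixLaw_prob {S : ℝ} (hS0 : 0 ≤ S) (hS1 : S < 1) :
    IsProbabilityMeasure (mixLaw S) := by
  constructor
  simp [mixLaw, Real.volume_Ioc, ← ENNReal.ofReal_add hS0 (by linarith : (0:ℝ) ≤ 1 - S)]

lemma mixLaw_prod {S : ℝ} (hS0 : 0 ≤ S) (hS1 : S < 1) :
    (mixLaw S).prod (mixLaw S) =
      (ENNReal.ofReal S * ENNReal.ofReal S) • Measure.dirac ((0:ℝ), (0:ℝ)) +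
      (ENNReal.ofReal S * ENNReal.ofReal (1-S)) • (L01.map (Prod.mk (0:ℝ))) +
      (ENNReal.ofReal (1-S) * ENNReal.ofReal S) • (L01.map (fun x => (x, (0:ℝ)))) +
      (ENNReal.ofReal (1-S) * ENNReal.ofReal (1-S)) • (L01.prod L01) := by
  haveI := mixLaw_prob hS0 hS1
  apply Measure.prod_eq
  intro s t hs ht
  classical
  rw [Measure.add_apply, Measure.add_apply, Measure.add_apply]
  simp only [Measure.smul_apply, smul_eq_mul]
  rw [Measure.dirac_apply' _ (hs.prod ht),
    Measure.map_apply measurable_prodMk_left (hs.prod ht),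
    Measure.map_apply (measurable_prodMk_right) (hs.prod ht),
    Measure.prod_prod, Set.mk_preimage_prod_left_eq_if, Set.mk_preimage_prod_right_eq_if]
  have hms : mixLaw S s = ENNReal.ofReal S * Set.indicator s 1 0 + ENNReal.ofReal (1-S) * L01 s := by
    simp [mixLaw, L01, Measure.dirac_apply' _ hs]
  have hmt : mixLaw S t = ENNReal.ofReal S * Set.indicator t 1 0 + ENNReal.ofReal (1-S) * L01 t := by
    simp [mixLaw, L01, Measure.dirac_apply' _ ht]
  rw [hms, hmt]
  by_cases h0s : (0:ℝ) ∈ s <;> by_cases h0t : (0:ℝ) ∈ t <;>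
    simp [h0s, h0t, Set.indicator_apply] <;> ring

lemma setIntegral_mixLaw_prod {S : ℝ} (hS0 : 0 ≤ S) (hS1 : S < 1)
    (f : ℝ × ℝ → ℝ) (hf : Continuous f) {s : Set (ℝ × ℝ)} (hs : MeasurableSet s) :
    ∫ p in s, f p ∂((mixLaw S).prod (mixLaw S)) =
      S * S * (∫ p, f p ∂((Measure.dirac ((0:ℝ),(0:ℝ))).restrict s)) +
      S * (1-S) * (∫ y in (Prod.mk (0:ℝ) ⁻¹' s) ∩ Set.Ioc 0 1, f (0, y)) +
      (1-S) * S * (∫ x in ((fun x => (x,(0:ℝ))) ⁻¹' s) ∩ Set.Ioc 0 1, f (x, 0)) +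
      (1-S) * (1-S) * (∫ p in s, f p ∂(L01.prod L01)) := by
  have hb0 : (0:ℝ) ≤ 1 - S := by linarith
  have hne : ∀ c d : ℝ, ENNReal.ofReal c * ENNReal.ofReal d ≠ ⊤ :=
    fun c d => ENNReal.mul_ne_top ENNReal.ofReal_ne_top ENNReal.ofReal_ne_top
  have J1 := (hI1 f hf hs).smul_measure (hne S S)
  have J2 := (hI2 f hf hs).smul_measure (hne S (1-S))
  have J3 := (hI3 f hf hs).smul_measure (hne (1-S) S)
  have J4 := (hI4 f hf hs).smul_measure (hne (1-S) (1-S))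
  have e : ((mixLaw S).prod (mixLaw S)).restrict s =
      (ENNReal.ofReal S * ENNReal.ofReal S) • ((Measure.dirac ((0:ℝ),(0:ℝ))).restrict s) +
      (ENNReal.ofReal S * ENNReal.ofReal (1-S)) • ((L01.map (Prod.mk (0:ℝ))).restrict s) +
      (ENNReal.ofReal (1-S) * ENNReal.ofReal S) • ((L01.map (fun x => (x, (0:ℝ)))).restrict s) +
      (ENNReal.ofReal (1-S) * ENNReal.ofReal (1-S)) • ((L01.prod L01).restrict s) := by
    rw [mixLaw_prod hS0 hS1]
    simp only [Measure.restrict_add, Measure.restrict_smul]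
  rw [e, integral_add_measure ((J1.add_measure J2).add_measure J3) J4, integral_add_measure (J1.add_measure J2) J3,
    integral_add_measure J1 J2, integral_smul_measure, integral_smul_measure,
    integral_smul_measure, integral_smul_measure]
  have h2 : ∫ p, f p ∂((L01.map (Prod.mk (0:ℝ))).restrict s)
      = ∫ y in (Prod.mk (0:ℝ) ⁻¹' s) ∩ Set.Ioc 0 1, f (0, y) := by
    rw [Measure.restrict_map measurable_prodMk_left hs, L01,
      Measure.restrict_restrict (measurable_prodMk_left hs),
      integral_map measurable_prodMk_left.aemeasurable hf.aestronglyMeasurable]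
  have h3 : ∫ p, f p ∂((L01.map (fun x => (x, (0:ℝ)))).restrict s)
      = ∫ x in ((fun x => (x,(0:ℝ))) ⁻¹' s) ∩ Set.Ioc 0 1, f (x, 0) := by
    rw [Measure.restrict_map measurable_prodMk_right hs, L01,
      Measure.restrict_restrict (measurable_prodMk_right hs),
      integral_map measurable_prodMk_right.aemeasurable hf.aestronglyMeasurable]
  rw [h2, h3]
  simp only [ENNReal.toReal_mul, ENNReal.toReal_ofReal hS0, ENNReal.toReal_ofReal hb0,
    smul_eq_mul]


lemma integral_prodL (f : ℝ × ℝ → ℝ) (hf : Continuous f) {s : Set (ℝ × ℝ)}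
    (hs : MeasurableSet s) :
    ∫ p in s, f p ∂(L01.prod L01)
      = ∫ x in Set.Ioc (0:ℝ) 1, ∫ y in {y | (x, y) ∈ s} ∩ Set.Ioc (0:ℝ) 1, f (x, y) := by
  rw [← integral_indicator hs,
    MeasureTheory.integral_prod _ ((integrable_indicator_iff hs).2 (hI4 f hf hs))]
  refine integral_congr_ae (Filter.Eventually.of_forall fun x => ?_)
  show ∫ y, s.indicator f (x, y) ∂L01 = _
  have hix : (fun y => s.indicator f (x, y))
      = ({y | (x, y) ∈ s}).indicator (fun y => f (x, y)) := by
    ext y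
    by_cases h : (x, y) ∈ s <;> simp [Set.indicator_apply, h]
  have hms : MeasurableSet {y | (x, y) ∈ s} := measurable_prodMk_left hs
  rw [hix, integral_indicator hms, L01, Measure.restrict_restrict hms]

lemma key1 (c a b : ℝ) (h : a ≤ b) (n : ℕ) :
    ∫ y in Set.Ioc a b, (c - y)^n = ((c-a)^(n+1) - (c-b)^(n+1))/((n:ℝ)+1) := by
  rw [← intervalIntegral.integral_of_le h,
    intervalIntegral.integral_comp_sub_left (fun y => y^n) c, integral_pow]

lemma key2 (c a b : ℝ) (h : a ≤ b) (n : ℕ) :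
    ∫ y in Set.Ioc a b, (y - c)^n = ((b-c)^(n+1) - (a-c)^(n+1))/((n:ℝ)+1) := by
  rw [← intervalIntegral.integral_of_le h,
    intervalIntegral.integral_comp_sub_right (fun y => y^n) c, integral_pow]

section vals
variable {S : ℝ} (hS0 : 0 ≤ S) (hS1 : S < 1)

lemma dirac_one :
    ∫ p, (1:ℝ) ∂((Measure.dirac ((0:ℝ),(0:ℝ))).restrict {p : ℝ × ℝ | p.1 ≤ p.2}) = 1 := by
  classical
  rw [MeasureTheory.restrict_dirac' (measurableSet_le measurable_fst measurable_snd),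
    if_pos (show ((0:ℝ),(0:ℝ)) ∈ {p : ℝ × ℝ | p.1 ≤ p.2} from le_refl (0:ℝ)), integral_dirac]

lemma preA2 : (Prod.mk (0:ℝ) ⁻¹' {p : ℝ × ℝ | p.1 ≤ p.2}) ∩ Set.Ioc 0 1 = Set.Ioc (0:ℝ) 1 :=
  Set.inter_eq_self_of_subset_right fun y hy => hy.1.le

lemma preA3 : ((fun x => (x,(0:ℝ))) ⁻¹' {p : ℝ × ℝ | p.1 ≤ p.2}) ∩ Set.Ioc 0 1 = (∅ : Set ℝ) := by
  ext x
  simp only [Set.mem_inter_iff, Set.mem_preimage, Set.mem_setOf_eq, Set.mem_Ioc,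
    Set.mem_empty_iff_false, iff_false, not_and]
  intro h1 h2 _
  linarith

lemma preB2 : (Prod.mk (0:ℝ) ⁻¹' {p : ℝ × ℝ | p.2 < p.1}) ∩ Set.Ioc 0 1 = (∅ : Set ℝ) := by
  ext y
  simp only [Set.mem_inter_iff, Set.mem_preimage, Set.mem_setOf_eq, Set.mem_Ioc,
    Set.mem_empty_iff_false, iff_false, not_and]
  intro h1 h2 _
  linarith

lemma preB3 : ((fun x => (x,(0:ℝ))) ⁻¹' {p : ℝ × ℝ | p.2 < p.1}) ∩ Set.Ioc 0 1
    = Set.Ioc (0:ℝ) 1 :=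
  Set.inter_eq_self_of_subset_right fun y hy => hy.1

lemma regA {x : ℝ} (hx : x ∈ Set.Ioc (0:ℝ) 1) :
    {y | (x, y) ∈ {p : ℝ × ℝ | p.1 ≤ p.2}} ∩ Set.Ioc 0 1 = Set.Icc x 1 := by
  ext y
  simp only [Set.mem_inter_iff, Set.mem_setOf_eq, Set.mem_Ioc, Set.mem_Icc]
  constructor
  · rintro ⟨h1, h2, h3⟩; exact ⟨h1, h3⟩
  · rintro ⟨h1, h2⟩; exact ⟨h1, lt_of_lt_of_le hx.1 h1, h2⟩

lemma regB {x : ℝ} (hx : x ∈ Set.Ioc (0:ℝ) 1) :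
    {y | (x, y) ∈ {p : ℝ × ℝ | p.2 < p.1}} ∩ Set.Ioc 0 1 = Set.Ioo (0:ℝ) x := by
  ext y
  simp only [Set.mem_inter_iff, Set.mem_setOf_eq, Set.mem_Ioc, Set.mem_Ioo]
  constructor
  · rintro ⟨h1, h2, h3⟩; exact ⟨h2, h1⟩
  · rintro ⟨h1, h2⟩; exact ⟨h2, h1, h2.le.trans hx.2⟩

lemma prodA1 : ∫ p in {p : ℝ × ℝ | p.1 ≤ p.2}, (1:ℝ) ∂(L01.prod L01) = 1/2 := by
  rw [integral_prodL _ continuous_const (measurableSet_le measurable_fst measurable_snd),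
    setIntegral_congr_fun measurableSet_Ioc
      (show Set.EqOn _ (fun x : ℝ => (-1) * (x-1)^1) (Set.Ioc (0:ℝ) 1) from fun x hx => by
        rw [regA hx, setIntegral_const, measureReal_def, Real.volume_Icc, smul_eq_mul,
          ENNReal.toReal_ofReal (by linarith [hx.2] : (0:ℝ) ≤ 1 - x)]
        ring),
    integral_const_mul, key2 1 0 1 zero_le_one 1]
  norm_num

lemma prodA_f : ∫ p in {p : ℝ × ℝ | p.1 ≤ p.2}, (p.1 - p.2) ∂(L01.prod L01) = -(1/6) := by
  rw [integral_prodL (fun p : ℝ × ℝ => p.1 - p.2) (continuous_fst.sub continuous_snd)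
      (measurableSet_le measurable_fst measurable_snd),
    setIntegral_congr_fun measurableSet_Ioc
      (show Set.EqOn _ (fun x : ℝ => (-(1:ℝ)/2) * (x-1)^2) (Set.Ioc (0:ℝ) 1) from fun x hx => by
        show ∫ y in _ ∩ _, (x - y) = _
        rw [regA hx, integral_Icc_eq_integral_Ioc,
          setIntegral_congr_fun measurableSet_Ioc
            (show Set.EqOn _ (fun y : ℝ => (x - y)^1) (Set.Ioc x 1) from fun y _ => by ring),
          key1 x x 1 hx.2 1]
        ring),
    integral_const_mul, key2 1 0 1 zero_le_one 2]
  norm_num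

lemma prodA_f2 : ∫ p in {p : ℝ × ℝ | p.1 ≤ p.2}, (p.1 - p.2)^2 ∂(L01.prod L01) = 1/12 := by
  rw [integral_prodL (fun p : ℝ × ℝ => (p.1 - p.2)^2) ((continuous_fst.sub continuous_snd).pow 2)
      (measurableSet_le measurable_fst measurable_snd),
    setIntegral_congr_fun measurableSet_Ioc
      (show Set.EqOn _ (fun x : ℝ => (-(1:ℝ)/3) * (x-1)^3) (Set.Ioc (0:ℝ) 1) from fun x hx => by
        show ∫ y in _ ∩ _, (x - y)^2 = _
        rw [regA hx, integral_Icc_eq_integral_Ioc, key1 x x 1 hx.2 2]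
        ring),
    integral_const_mul, key2 1 0 1 zero_le_one 3]
  norm_num

lemma prodB_f : ∫ p in {p : ℝ × ℝ | p.2 < p.1}, (p.1 - p.2) ∂(L01.prod L01) = 1/6 := by
  rw [integral_prodL (fun p : ℝ × ℝ => p.1 - p.2) (continuous_fst.sub continuous_snd)
      (measurableSet_lt measurable_snd measurable_fst),
    setIntegral_congr_fun measurableSet_Ioc
      (show Set.EqOn _ (fun x : ℝ => ((1:ℝ)/2) * (x-0)^2) (Set.Ioc (0:ℝ) 1) from fun x hx => by
        show ∫ y in _ ∩ _, (x - y) = _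
        rw [regB hx, ← integral_Ioc_eq_integral_Ioo,
          setIntegral_congr_fun measurableSet_Ioc
            (show Set.EqOn _ (fun y : ℝ => (x - y)^1) (Set.Ioc 0 x) from fun y _ => by ring),
          key1 x 0 x hx.1.le 1]
        ring),
    integral_const_mul, key2 0 0 1 zero_le_one 2]
  norm_num

lemma prodB_f2 : ∫ p in {p : ℝ × ℝ | p.2 < p.1}, (p.1 - p.2)^2 ∂(L01.prod L01) = 1/12 := by
  rw [integral_prodL (fun p : ℝ × ℝ => (p.1 - p.2)^2) ((continuous_fst.sub continuous_snd).pow 2)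
      (measurableSet_lt measurable_snd measurable_fst),
    setIntegral_congr_fun measurableSet_Ioc
      (show Set.EqOn _ (fun x : ℝ => ((1:ℝ)/3) * (x-0)^3) (Set.Ioc (0:ℝ) 1) from fun x hx => by
        show ∫ y in _ ∩ _, (x - y)^2 = _
        rw [regB hx, ← integral_Ioc_eq_integral_Ioo, key1 x 0 x hx.1.le 2]
        ring),
    integral_const_mul, key2 0 0 1 zero_le_one 3]
  norm_num

end vals

lemma mixLaw_Icc_compl {S : ℝ} (hS0 : 0 ≤ S) (hS1 : S < 1) :
    mixLaw S (Set.Icc (0:ℝ) 1)ᶜ = 0 := by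
  have hm : MeasurableSet (Set.Icc (0:ℝ) 1)ᶜ := measurableSet_Icc.compl
  have h1 : (Set.Icc (0:ℝ) 1)ᶜ ∩ Set.Ioc 0 1 = ∅ := by
    rw [Set.eq_empty_iff_forall_notMem]
    rintro x ⟨hc, h2⟩
    exact hc ⟨h2.1.le, h2.2⟩
  simp [mixLaw, Measure.dirac_apply' _ hm, Measure.restrict_apply hm, h1,
    Set.indicator_apply, Set.mem_Icc]

lemma box0 {S : ℝ} (hS0 : 0 ≤ S) (hS1 : S < 1) :
    (mixLaw S).prod (mixLaw S) ((Set.Icc (0:ℝ) 1 ×ˢ Set.Icc (0:ℝ) 1)ᶜ) = 0 := by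
  haveI := mixLaw_prob hS0 hS1
  rw [Set.compl_prod_eq_union]
  refine measure_union_null ?_ ?_ <;> rw [Measure.prod_prod, mixLaw_Icc_compl hS0 hS1] <;> simp

lemma measA {S : ℝ} (hS0 : 0 ≤ S) (hS1 : S < 1) :
    (mixLaw S).prod (mixLaw S) {p : ℝ × ℝ | p.1 ≤ p.2} = ENNReal.ofReal ((1+S^2)/2) := by
  haveI := mixLaw_prob hS0 hS1
  have hsA : MeasurableSet {p : ℝ × ℝ | p.1 ≤ p.2} :=
    measurableSet_le measurable_fst measurable_snd
  have h := setIntegral_mixLaw_prod hS0 hS1 (fun _ => (1:ℝ)) continuous_const hsA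
  rw [dirac_one, preA2, preA3, prodA1] at h
  have h2 : ∫ y in Set.Ioc (0:ℝ) 1, (1:ℝ) = 1 := by simp [Real.volume_Ioc]
  rw [h2] at h
  simp only [Measure.restrict_empty, integral_zero_measure] at h
  have h3 : ∫ p in {p : ℝ × ℝ | p.1 ≤ p.2}, (1:ℝ) ∂((mixLaw S).prod (mixLaw S))
      = ((mixLaw S).prod (mixLaw S) {p : ℝ × ℝ | p.1 ≤ p.2}).toReal := by
    rw [setIntegral_const]; simp [measureReal_def]
  rw [h3] at h
  rw [← ENNReal.ofReal_toReal (measure_ne_top ((mixLaw S).prod (mixLaw S)) _), h]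
  congr 1
  ring

lemma measB {S : ℝ} (hS0 : 0 ≤ S) (hS1 : S < 1) :
    (mixLaw S).prod (mixLaw S) {p : ℝ × ℝ | p.2 < p.1} = ENNReal.ofReal ((1-S^2)/2) := by
  haveI := mixLaw_prob hS0 hS1
  have hcompl : {p : ℝ × ℝ | p.2 < p.1} = {p : ℝ × ℝ | p.1 ≤ p.2}ᶜ := by
    ext p; simp [not_le]
  rw [hcompl, measure_compl (measurableSet_le measurable_fst measurable_snd)
    (measure_ne_top _ _), measA hS0 hS1, measure_univ,
    show ((1-S^2)/2 : ℝ) = 1 - (1+S^2)/2 by ring,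
    ENNReal.ofReal_sub _ (by positivity), ENNReal.ofReal_one]

lemma variance_cond_aux {Ω : Type*} [MeasureSpace Ω] [IsProbabilityMeasure (ℙ : Measure Ω)]
    (X1 X2 : Ω → ℝ) (hX1 : Measurable X1) (hX2 : Measurable X2)
    (ν : Measure (ℝ × ℝ))
    (hmapT : Measure.map (fun ω => (X1 ω, X2 ω)) ℙ = ν)
    (hbox : ν ((Set.Icc (0:ℝ) 1 ×ˢ Set.Icc (0:ℝ) 1)ᶜ) = 0)
    {s : Set (ℝ × ℝ)} (hs : MeasurableSet s) (c m1 m2 : ℝ) (hc : 0 < c)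
    (hνs : ν s = ENNReal.ofReal c)
    (hm1 : ∫ p in s, (p.1 - p.2) ∂ν = m1)
    (hm2 : ∫ p in s, (p.1 - p.2)^2 ∂ν = m2) :
    variance (fun ω => X1 ω - X2 ω) (ℙ[|(fun ω => (X1 ω, X2 ω)) ⁻¹' s])
      = m2/c - (m1/c)^2 := by
  set T : Ω → ℝ × ℝ := fun ω => (X1 ω, X2 ω) with hTdef
  have hT : Measurable T := hX1.prodMk hX2
  have hP : ℙ (T ⁻¹' s) = ENNReal.ofReal c := by
    rw [← Measure.map_apply hT hs, hmapT, hνs]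
  have hPne : ℙ (T ⁻¹' s) ≠ 0 := by
    rw [hP]; exact (ENNReal.ofReal_pos.2 hc).ne'
  haveI : IsProbabilityMeasure (ℙ[|T ⁻¹' s]) := cond_isProbabilityMeasure hPne
  have hfm : Measurable (fun ω => X1 ω - X2 ω) := hX1.sub hX2
  -- a.e. bound
  have hboxΩ : ℙ (T ⁻¹' (Set.Icc (0:ℝ) 1 ×ˢ Set.Icc (0:ℝ) 1)ᶜ) = 0 := by
    rw [← Measure.map_apply hT (measurableSet_Icc.prod measurableSet_Icc).compl, hmapT, hbox]
  have haeP : ∀ᵐ ω ∂(ℙ : Measure Ω), ‖X1 ω - X2 ω‖ ≤ 1 := by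
    rw [MeasureTheory.ae_iff]
    refine measure_mono_null (fun ω hω => ?_) hboxΩ
    simp only [Set.mem_setOf_eq, not_le] at hω
    simp only [Set.mem_preimage, Set.mem_compl_iff]
    intro hmem
    obtain ⟨⟨h1, h2⟩, ⟨h3, h4⟩⟩ := hmem
    have h1' : 0 ≤ X1 ω := h1
    have h2' : X1 ω ≤ 1 := h2
    have h3' : 0 ≤ X2 ω := h3
    have h4' : X2 ω ≤ 1 := h4
    have : |X1 ω - X2 ω| ≤ 1 := abs_le.2 ⟨by linarith, by linarith⟩
    rw [Real.norm_eq_abs] at hω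
    linarith
  have hae : ∀ᵐ ω ∂(ℙ[|T ⁻¹' s]), ‖X1 ω - X2 ω‖ ≤ 1 :=
    haeP.filter_mono cond_absolutelyContinuous.ae_le
  have hmem : MemLp (fun ω => X1 ω - X2 ω) 2 (ℙ[|T ⁻¹' s]) :=
    MemLp.of_bound hfm.aestronglyMeasurable 1 hae
  rw [variance_eq_sub hmem]
  have hcond : (ℙ[|T ⁻¹' s]) = (ENNReal.ofReal c)⁻¹ • (ℙ : Measure Ω).restrict (T ⁻¹' s) := by
    rw [ProbabilityTheory.cond, hP]
  have hint : ∀ g : ℝ × ℝ → ℝ, Continuous g → ∀ V : ℝ, (∫ p in s, g p ∂ν = V) →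
      ∫ ω, g (T ω) ∂(ℙ[|T ⁻¹' s]) = c⁻¹ * V := by
    intro g hg V hV
    rw [hcond, integral_smul_measure, ← setIntegral_map hs hg.aestronglyMeasurable
      hT.aemeasurable, hmapT, hV, ENNReal.toReal_inv, ENNReal.toReal_ofReal hc.le,
      smul_eq_mul]
  have h1 : ∫ ω, (X1 ω - X2 ω) ∂(ℙ[|T ⁻¹' s]) = c⁻¹ * m1 :=
    hint (fun p => p.1 - p.2) (continuous_fst.sub continuous_snd) m1 hm1
  have h2 : ∫ ω, ((fun ω => X1 ω - X2 ω)^2) ω ∂(ℙ[|T ⁻¹' s]) = c⁻¹ * m2 := by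
    have he : ((fun ω => X1 ω - X2 ω)^2) = fun ω => (fun p : ℝ × ℝ => (p.1 - p.2)^2) (T ω) := by
      ext ω; simp [T]
    rw [he]
    exact hint (fun p : ℝ × ℝ => (p.1 - p.2)^2)
      ((continuous_fst.sub continuous_snd).pow 2) m2 hm2
  rw [h1, h2]
  field_simp

lemma dirac_subA :
    ∫ p, (p.1 - p.2) ∂((Measure.dirac ((0:ℝ),(0:ℝ))).restrict {p : ℝ × ℝ | p.1 ≤ p.2}) = 0 := by
  classical
  rw [MeasureTheory.restrict_dirac' (measurableSet_le measurable_fst measurable_snd),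
    if_pos (show ((0:ℝ),(0:ℝ)) ∈ {p : ℝ × ℝ | p.1 ≤ p.2} from le_refl (0:ℝ)),
    integral_dirac]
  norm_num

lemma dirac_subA2 :
    ∫ p, (p.1 - p.2)^2 ∂((Measure.dirac ((0:ℝ),(0:ℝ))).restrict {p : ℝ × ℝ | p.1 ≤ p.2}) = 0 := by
  classical
  rw [MeasureTheory.restrict_dirac' (measurableSet_le measurable_fst measurable_snd),
    if_pos (show ((0:ℝ),(0:ℝ)) ∈ {p : ℝ × ℝ | p.1 ≤ p.2} from le_refl (0:ℝ)),
    integral_dirac]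
  norm_num

lemma dirac_B (f : ℝ × ℝ → ℝ) :
    ∫ p, f p ∂((Measure.dirac ((0:ℝ),(0:ℝ))).restrict {p : ℝ × ℝ | p.2 < p.1}) = 0 := by
  classical
  rw [MeasureTheory.restrict_dirac' (measurableSet_lt measurable_snd measurable_fst),
    if_neg (show ((0:ℝ),(0:ℝ)) ∉ {p : ℝ × ℝ | p.2 < p.1} from lt_irrefl (0:ℝ)),
    integral_zero_measure]

lemma oneD1 : ∫ y in Set.Ioc (0:ℝ) 1, ((0:ℝ), y).1 - ((0:ℝ), y).2 = -(1/2) := by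
  rw [setIntegral_congr_fun measurableSet_Ioc
      (show Set.EqOn _ (fun y : ℝ => (-1) * (y - 0)^1) (Set.Ioc (0:ℝ) 1) from
        fun y _ => by simp),
    integral_const_mul, key2 0 0 1 zero_le_one 1]
  norm_num

lemma oneD2 : ∫ y in Set.Ioc (0:ℝ) 1, (((0:ℝ), y).1 - ((0:ℝ), y).2)^2 = 1/3 := by
  rw [setIntegral_congr_fun measurableSet_Ioc
      (show Set.EqOn _ (fun y : ℝ => (y - 0)^2) (Set.Ioc (0:ℝ) 1) from
        fun y _ => by simp),
    key2 0 0 1 zero_le_one 2]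
  norm_num

lemma oneD3 : ∫ x in Set.Ioc (0:ℝ) 1, (x, (0:ℝ)).1 - (x, (0:ℝ)).2 = 1/2 := by
  rw [setIntegral_congr_fun measurableSet_Ioc
      (show Set.EqOn _ (fun x : ℝ => (x - 0)^1) (Set.Ioc (0:ℝ) 1) from
        fun x _ => by simp),
    key2 0 0 1 zero_le_one 1]
  norm_num

lemma oneD4 : ∫ x in Set.Ioc (0:ℝ) 1, ((x, (0:ℝ)).1 - (x, (0:ℝ)).2)^2 = 1/3 := by
  rw [setIntegral_congr_fun measurableSet_Ioc
      (show Set.EqOn _ (fun x : ℝ => (x - 0)^2) (Set.Ioc (0:ℝ) 1) from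
        fun x _ => by simp),
    key2 0 0 1 zero_le_one 2]
  norm_num

lemma intA_f {S : ℝ} (hS0 : 0 ≤ S) (hS1 : S < 1) :
    ∫ p in {p : ℝ × ℝ | p.1 ≤ p.2}, (p.1 - p.2) ∂((mixLaw S).prod (mixLaw S))
      = -((1-S)*(1+2*S)/6) := by
  rw [setIntegral_mixLaw_prod hS0 hS1 (fun p => p.1 - p.2)
      (continuous_fst.sub continuous_snd)
      (measurableSet_le measurable_fst measurable_snd),
    dirac_subA, preA2, preA3, prodA_f, oneD1]
  simp only [Measure.restrict_empty, integral_zero_measure]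
  ring

lemma intA_f2 {S : ℝ} (hS0 : 0 ≤ S) (hS1 : S < 1) :
    ∫ p in {p : ℝ × ℝ | p.1 ≤ p.2}, (p.1 - p.2)^2 ∂((mixLaw S).prod (mixLaw S))
      = (1-S)*(1+3*S)/12 := by
  rw [setIntegral_mixLaw_prod hS0 hS1 (fun p => (p.1 - p.2)^2)
      ((continuous_fst.sub continuous_snd).pow 2)
      (measurableSet_le measurable_fst measurable_snd),
    dirac_subA2, preA2, preA3, prodA_f2, oneD2]
  simp only [Measure.restrict_empty, integral_zero_measure]
  ring

lemma intB_f {S : ℝ} (hS0 : 0 ≤ S) (hS1 : S < 1) :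
    ∫ p in {p : ℝ × ℝ | p.2 < p.1}, (p.1 - p.2) ∂((mixLaw S).prod (mixLaw S))
      = (1-S)*(1+2*S)/6 := by
  rw [setIntegral_mixLaw_prod hS0 hS1 (fun p => p.1 - p.2)
      (continuous_fst.sub continuous_snd)
      (measurableSet_lt measurable_snd measurable_fst),
    dirac_B, preB2, preB3, prodB_f, oneD3]
  simp only [Measure.restrict_empty, integral_zero_measure]
  ring

lemma intB_f2 {S : ℝ} (hS0 : 0 ≤ S) (hS1 : S < 1) :
    ∫ p in {p : ℝ × ℝ | p.2 < p.1}, (p.1 - p.2)^2 ∂((mixLaw S).prod (mixLaw S))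
      = (1-S)*(1+3*S)/12 := by
  rw [setIntegral_mixLaw_prod hS0 hS1 (fun p => (p.1 - p.2)^2)
      ((continuous_fst.sub continuous_snd).pow 2)
      (measurableSet_lt measurable_snd measurable_fst),
    dirac_B, preB2, preB3, prodB_f2, oneD4]
  simp only [Measure.restrict_empty, integral_zero_measure]
  ring

theorem stmt10 {Ω : Type*} [MeasureSpace Ω] [IsProbabilityMeasure (ℙ : Measure Ω)]
    (S : ℝ) (hS : S ∈ Set.Ico (0:ℝ) 1)
    (X1 X2 : Ω → ℝ) (hX1 : Measurable X1) (hX2 : Measurable X2)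
    (hindep : IndepFun X1 X2)
    (hL1 : Measure.map X1 ℙ = mixLaw S) (hL2 : Measure.map X2 ℙ = mixLaw S) :
    variance (fun ω => X1 ω - X2 ω) (ℙ[|{ω | X1 ω ≤ X2 ω}])
      = (1/6) * ((1 - S)*(1 + 3*S) / (1 + S^2))
        - ((1/3) * ((1 - S)*(1 + 2*S) / (1 + S^2)))^2 ∧
    variance (fun ω => X1 ω - X2 ω) (ℙ[|{ω | X2 ω < X1 ω}])
      = (1/6) * ((1 + 3*S) / (1 + S)) - ((1/3) * ((1 + 2*S) / (1 + S)))^2 := by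
  obtain ⟨hS0, hS1⟩ := hS
  have hmapT : Measure.map (fun ω => (X1 ω, X2 ω)) ℙ = (mixLaw S).prod (mixLaw S) := by
    rw [(indepFun_iff_map_prod_eq_prod_map_map hX1.aemeasurable hX2.aemeasurable).mp hindep,
      hL1, hL2]
  have hsA : MeasurableSet {p : ℝ × ℝ | p.1 ≤ p.2} :=
    measurableSet_le measurable_fst measurable_snd
  have hsB : MeasurableSet {p : ℝ × ℝ | p.2 < p.1} :=
    measurableSet_lt measurable_snd measurable_fst
  have h1S : (0:ℝ) < 1 - S := by linarith
  have h1pS : (0:ℝ) < 1 + S := by linarith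
  have hSq : (0:ℝ) < 1 + S^2 := by positivity
  constructor
  · have hA : {ω | X1 ω ≤ X2 ω} = (fun ω => (X1 ω, X2 ω)) ⁻¹' {p : ℝ × ℝ | p.1 ≤ p.2} := rfl
    rw [hA, variance_cond_aux X1 X2 hX1 hX2 _ hmapT (box0 hS0 hS1) hsA
      ((1+S^2)/2) (-((1-S)*(1+2*S)/6)) ((1-S)*(1+3*S)/12) (by positivity)
      (measA hS0 hS1) (intA_f hS0 hS1) (intA_f2 hS0 hS1)]
    field_simp
    ring
  · have hB : {ω | X2 ω < X1 ω} = (fun ω => (X1 ω, X2 ω)) ⁻¹' {p : ℝ × ℝ | p.2 < p.1} := rfl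
    rw [hB, variance_cond_aux X1 X2 hX1 hX2 _ hmapT (box0 hS0 hS1) hsB
      ((1-S^2)/2) ((1-S)*(1+2*S)/6) ((1-S)*(1+3*S)/12) (by nlinarith)
      (measB hS0 hS1) (intB_f hS0 hS1) (intB_f2 hS0 hS1)]
    have hne : (1 - S^2) ≠ 0 := by nlinarith
    field_simp
    ring
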